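/- Let X be the rack of transpositions in S_n (n ≥ 3) under conjugation and c(x,y) = (xyx^{-1}, x). Then the number of c-orbits on X × X is f(n) = C(n,2) + (1/2)·C(n,2)·C(n-2,2) + 2·C(n,3), where the three summands count orbits of size 1, 2, and 3 respectively. Equivalently, f(n) = n(3n^3 − 10n^2 + 21n − 14)/24. -/

import Mathlib

open Equiv Equiv.Perm Finset

attribute [local instance] Classical.propDecidable

variable {n : ℕ}

lemma isSwap_conj {x y : Perm (Fin n)} (hx : x.IsSwap) (hy : y.IsSwap) :
    (x * y * x⁻¹).IsSwap := by
  obtain ⟨a, b, hab, rfl⟩ := hy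
  exact ⟨x a, x b, fun h => hab (x.injective h), ((swap_apply_apply x a b)).symm⟩

lemma swap_eq_of_support_eq {x y : Perm (Fin n)} (hx : x.IsSwap) (hy : y.IsSwap)
    (h : x.support = y.support) : x = y := by
  obtain ⟨a, b, hab, rfl⟩ := hx
  obtain ⟨c, d, hcd, rfl⟩ := hy
  rw [support_swap hab, support_swap hcd] at h
  have ha : a = c ∨ a = d := by
    have : a ∈ ({c, d} : Finset (Fin n)) := h ▸ (by simp)
    simpa using this
  have hb : b = c ∨ b = d := by
    have : b ∈ ({c, d} : Finset (Fin n)) := h ▸ (by simp)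
    simpa using this
  rcases ha with rfl | rfl <;> rcases hb with rfl | rfl
  · exact absurd rfl hab
  · rfl
  · exact swap_comm _ _
  · exact absurd rfl hab

lemma swap_trichotomy {x y : Perm (Fin n)} (hx : x.IsSwap) (hy : y.IsSwap) :
    x = y ∨ Disjoint x.support y.support ∨
      ∃ a b c, a ≠ b ∧ a ≠ c ∧ b ≠ c ∧ x = swap a b ∧ y = swap b c := by
  obtain ⟨a, b, hab, rfl⟩ := hx
  obtain ⟨c, d, hcd, rfl⟩ := hy
  by_cases hac : a = c
  · subst hac
    by_cases hbd : b = d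
    · subst hbd; exact Or.inl rfl
    · exact Or.inr (Or.inr ⟨b, a, d, hab.symm, hbd, hcd, swap_comm a b, rfl⟩)
  · by_cases had : a = d
    · subst had
      by_cases hbc : b = c
      · subst hbc; exact Or.inl (by rw [swap_comm])
      · exact Or.inr (Or.inr ⟨b, a, c, hab.symm, hbc, hac,
          swap_comm a b, swap_comm c a⟩)
    · by_cases hbc : b = c
      · subst hbc
        exact Or.inr (Or.inr ⟨a, b, d, hab, had, hcd, rfl, rfl⟩)
      · by_cases hbd : b = d
        · subst hbd
          exact Or.inr (Or.inr ⟨a, b, c, hab, hac, hbc, rfl, swap_comm c b⟩)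
        · refine Or.inr (Or.inl ?_)
          rw [support_swap hab, support_swap hcd]
          simp [Finset.disjoint_left, hac, had, hbc, hbd]

section ZFacts

variable {a b c : Fin n}

lemma z_apply_a (hab : a ≠ b) (hac : a ≠ c) : (swap a b * swap b c) a = b := by
  rw [Perm.mul_apply, swap_apply_of_ne_of_ne hab hac, swap_apply_left]

lemma z_apply_b (hac : a ≠ c) (hbc : b ≠ c) : (swap a b * swap b c) b = c := by
  rw [Perm.mul_apply, swap_apply_left, swap_apply_of_ne_of_ne hac.symm hbc.symm]

lemma z_apply_c (hab : a ≠ b) (hac : a ≠ c) : (swap a b * swap b c) c = a := by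
  rw [Perm.mul_apply, swap_apply_right, swap_apply_right]

lemma z_apply_other {t : Fin n} (hta : t ≠ a) (htb : t ≠ b) (htc : t ≠ c) :
    (swap a b * swap b c) t = t := by
  rw [mul_apply, swap_apply_of_ne_of_ne htb htc, swap_apply_of_ne_of_ne hta htb]

lemma z_support (hab : a ≠ b) (hac : a ≠ c) (hbc : b ≠ c) :
    (swap a b * swap b c).support = {a, b, c} := by
  ext t
  simp only [Perm.mem_support, Finset.mem_insert, Finset.mem_singleton]
  constructor
  · intro h
    by_contra hcon
    push_neg at hcon
    exact h (z_apply_other hcon.1 hcon.2.1 hcon.2.2)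
  · rintro (rfl | rfl | rfl)
    · rw [z_apply_a hab hac]; exact hab.symm
    · rw [z_apply_b hac hbc]; exact hbc.symm
    · rw [z_apply_c hab hac]; exact hac

lemma z_support_card (hab : a ≠ b) (hac : a ≠ c) (hbc : b ≠ c) :
    (swap a b * swap b c).support.card = 3 := by
  rw [z_support hab hac hbc]
  rw [Finset.card_insert_of_notMem (by simp [hab, hac]),
    Finset.card_insert_of_notMem (by simp [hbc])]
  simp

end ZFacts

lemma three_cycle_values {s : Finset (Fin n)} (h3 : s.card = 3) {z : Perm (Fin n)}
    (hz : z.support = s) {m t : Fin n} (hm : m ∈ s) (ht : t ∈ s) (htm : t ≠ m)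
    (htu : t ≠ z m) : z (z m) = t ∧ z t = m := by
  have hmem : ∀ x, x ∈ s ↔ z x ≠ x := fun x => by rw [← hz, Perm.mem_support]
  have hcl : ∀ x, x ∈ s → z x ∈ s := fun x hx => by
    rw [← hz] at hx ⊢; exact Perm.apply_mem_support.2 hx
  have hu : z m ∈ s := hcl m hm
  have hum : z m ≠ m := (hmem m).1 hm
  have hseq : s = {m, z m, t} := by
    refine (Finset.eq_of_subset_of_card_le ?_ ?_).symm
    · intro x hx
      simp only [Finset.mem_insert, Finset.mem_singleton] at hx
      rcases hx with rfl | rfl | rfl <;> assumption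
    · rw [h3, Finset.card_insert_of_notMem (by simp [hum.symm, htm.symm, htu.symm]),
        Finset.card_insert_of_notMem (by simp [htu.symm])]
      simp
  have hzt : z t = m := by
    have h1 : z t ∈ s := hcl t ht
    have h2 : z t ≠ t := (hmem t).1 ht
    have h3' : z t ≠ z m := fun h => htm (z.injective h)
    rw [hseq] at h1
    simp only [Finset.mem_insert, Finset.mem_singleton] at h1
    rcases h1 with h | h | h
    · exact h
    · exact absurd h h3'
    · exact absurd h h2
  refine ⟨?_, hzt⟩
  have h1 : z (z m) ∈ s := hcl _ hu
  have h2 : z (z m) ≠ z m := (hmem _).1 hu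
  have h4 : z (z m) ≠ m := fun h => htu (z.injective (h.trans hzt.symm)).symm
  rw [hseq] at h1
  simp only [Finset.mem_insert, Finset.mem_singleton] at h1
  rcases h1 with h | h | h
  · exact absurd h h4
  · exact absurd h h2
  · exact h

lemma three_cycle_det {s : Finset (Fin n)} (h3 : s.card = 3) {z z' : Perm (Fin n)}
    (hz : z.support = s) (hz' : z'.support = s) {m : Fin n} (hm : m ∈ s)
    (heq : z m = z' m) : z = z' := by
  have hu : z m ∈ s := by rw [← hz]; exact Perm.apply_mem_support.2 (hz ▸ hm)
  have hum : z m ≠ m := by rw [← hz, Perm.mem_support] at hm; exact hm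
  -- third element
  obtain ⟨t, ht⟩ : ∃ t, t ∈ s ∧ t ≠ m ∧ t ≠ z m := by
    have : ((s.erase m).erase (z m)).Nonempty := by
      rw [← Finset.card_pos, Finset.card_erase_of_mem (Finset.mem_erase.2 ⟨hum, hu⟩),
        Finset.card_erase_of_mem hm, h3]
      norm_num
    obtain ⟨t, ht⟩ := this
    simp only [Finset.mem_erase] at ht
    exact ⟨t, ht.2.2, ht.2.1, ht.1⟩
  obtain ⟨hts, htm, htu⟩ := ht
  obtain ⟨hv1, hv2⟩ := three_cycle_values h3 hz hm hts htm htu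
  obtain ⟨hv1', hv2'⟩ := three_cycle_values h3 hz' hm hts htm (heq ▸ htu)
  have hseq : s = {m, z m, t} := by
    refine (Finset.eq_of_subset_of_card_le ?_ ?_).symm
    · intro x hx
      simp only [Finset.mem_insert, Finset.mem_singleton] at hx
      rcases hx with rfl | rfl | rfl <;> assumption
    · rw [h3, Finset.card_insert_of_notMem (by simp [hum.symm, htm.symm, htu.symm]),
        Finset.card_insert_of_notMem (by simp [htu.symm])]
      simp
  ext x
  rcases Finset.decidableMem x s with hx | hx
  · have h1 : z x = x := by rw [← Perm.notMem_support, hz]; exact hx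
    have h2 : z' x = x := by rw [← Perm.notMem_support, hz']; exact hx
    simp [h1, h2]
  · rw [hseq] at hx
    simp only [Finset.mem_insert, Finset.mem_singleton] at hx
    rcases hx with rfl | rfl | rfl
    · simp [heq]
    · have h5 : z' (z m) = t := by rw [heq, hv1']
      rw [hv1, h5]
    · rw [hv2, hv2']

def flt (s t : Finset (Fin n)) : Prop := ∃ u ∈ s, ∀ v ∈ t, u < v

lemma flt_asymm {s t : Finset (Fin n)} (h : flt s t) (h' : flt t s) : False := by
  obtain ⟨u, hu, h⟩ := h
  obtain ⟨w, hw, h'⟩ := h'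
  exact absurd (h w hw) (not_lt.2 (h' u hu).le)

lemma flt_total {s t : Finset (Fin n)} (hs : s.Nonempty) (ht : t.Nonempty)
    (hd : Disjoint s t) : flt s t ∨ flt t s := by
  rcases lt_trichotomy (s.min' hs) (t.min' ht) with h | h | h
  · exact Or.inl ⟨s.min' hs, s.min'_mem hs, fun v hv => lt_of_lt_of_le h (t.min'_le v hv)⟩
  · exact absurd (h ▸ s.min'_mem hs) (fun hmem => Finset.disjoint_left.1 hd hmem (h ▸ t.min'_mem ht))
  · exact Or.inr ⟨t.min' ht, t.min'_mem ht, fun v hv => lt_of_lt_of_le h (s.min'_le v hv)⟩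

lemma case3_explicit {x y : Perm (Fin n)} (hx : x.IsSwap) (hy : y.IsSwap)
    (hne : x ≠ y) (hnd : ¬ Disjoint x.support y.support) :
    ∃ a b c, a ≠ b ∧ a ≠ c ∧ b ≠ c ∧ x = swap a b ∧ y = swap b c := by
  rcases swap_trichotomy hx hy with h | h | h
  exacts [absurd h hne, absurd h hnd, h]

lemma case3_card {x y : Perm (Fin n)} (hx : x.IsSwap) (hy : y.IsSwap)
    (hne : x ≠ y) (hnd : ¬ Disjoint x.support y.support) :
    (x * y).support.card = 3 := by
  obtain ⟨a, b, c, hab, hac, hbc, rfl, rfl⟩ := case3_explicit hx hy hne hnd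
  exact z_support_card hab hac hbc

lemma min_props {z : Perm (Fin n)} (h : z.support.Nonempty) :
    z (z.support.min' h) ∈ z.support ∧
      ∃ u ∈ z.support, u < z (z.support.min' h) := by
  have hm : z.support.min' h ∈ z.support := z.support.min'_mem h
  have h1 : z (z.support.min' h) ∈ z.support := Perm.apply_mem_support.2 hm
  refine ⟨h1, z.support.min' h, hm, ?_⟩
  refine lt_of_le_of_ne (z.support.min'_le _ h1) ?_
  intro hcon
  exact (Perm.mem_support.1 hm) hcon.symm

abbrev SP (n : ℕ) := {p : Perm (Fin n) × Perm (Fin n) // p.1.IsSwap ∧ p.2.IsSwap}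

abbrev OT (n : ℕ) :=
  {s : Finset (Fin n) // s.card = 2} ⊕
  {q : Finset (Fin n) × Finset (Fin n) //
    q.1.card = 2 ∧ q.2.card = 2 ∧ Disjoint q.1 q.2 ∧ flt q.1 q.2} ⊕
  {q : Finset (Fin n) × Fin n // q.1.card = 3 ∧ q.2 ∈ q.1 ∧ ∃ u ∈ q.1, u < q.2}

lemma swap_support_card {x : Perm (Fin n)} (hx : x.IsSwap) : x.support.card = 2 :=
  Perm.card_support_eq_two.2 hx

lemma swap_support_nonempty {x : Perm (Fin n)} (hx : x.IsSwap) : x.support.Nonempty := by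
  rw [← Finset.card_pos, swap_support_card hx]; norm_num

noncomputable def Phi (p : SP n) : OT n :=
  if h1 : p.val.1 = p.val.2 then Sum.inl ⟨p.val.1.support, swap_support_card p.2.1⟩
  else if h2 : Disjoint p.val.1.support p.val.2.support then
    if h3 : flt p.val.1.support p.val.2.support then
      Sum.inr (Sum.inl ⟨(p.val.1.support, p.val.2.support),
        swap_support_card p.2.1, swap_support_card p.2.2, h2, h3⟩)
    else
      Sum.inr (Sum.inl ⟨(p.val.2.support, p.val.1.support),
        swap_support_card p.2.2, swap_support_card p.2.1, h2.symm,
        ((flt_total (swap_support_nonempty p.2.1) (swap_support_nonempty p.2.2) h2).resolve_left h3)⟩)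
  else
    Sum.inr (Sum.inr ⟨((p.val.1 * p.val.2).support,
      (p.val.1 * p.val.2) ((p.val.1 * p.val.2).support.min'
        (by rw [← Finset.card_pos, case3_card p.2.1 p.2.2 h1 h2]; norm_num))),
      case3_card p.2.1 p.2.2 h1 h2,
      (min_props _).1, (min_props _).2⟩)

noncomputable def cS (p : SP n) : SP n :=
  ⟨(p.val.1 * p.val.2 * p.val.1⁻¹, p.val.1), isSwap_conj p.2.1 p.2.2, p.2.1⟩

lemma conj_eq_iff {x y : Perm (Fin n)} : x * y * x⁻¹ = x ↔ y = x := by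
  constructor
  · intro h
    have := congrArg (fun w => x⁻¹ * w * x) h
    simpa [mul_assoc] using this
  · rintro rfl; simp

lemma cS_prod (p : SP n) : (cS p).val.1 * (cS p).val.2 = p.val.1 * p.val.2 := by
  simp [cS, mul_assoc]

lemma case3_not_commute {x y : Perm (Fin n)} (hx : x.IsSwap) (hy : y.IsSwap)
    (hne : x ≠ y) (hnd : ¬ Disjoint x.support y.support) : x * y ≠ y * x := by
  obtain ⟨a, b, c, hab, hac, hbc, rfl, rfl⟩ := case3_explicit hx hy hne hnd
  intro h
  have h1 : (swap a b * swap b c) c = a := z_apply_c hab hac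
  have h2 : (swap b c * swap a b) c = b := by
    rw [Perm.mul_apply, swap_apply_of_ne_of_ne hac.symm hbc.symm, swap_apply_right]
  rw [h] at h1
  rw [h1] at h2
  exact hab h2

lemma Phi_diag (p : SP n) (h1 : p.val.1 = p.val.2) :
    Phi p = Sum.inl ⟨p.val.1.support, swap_support_card p.2.1⟩ := by
  rw [Phi, dif_pos h1]

lemma Phi_disj (p : SP n) (h1 : ¬ p.val.1 = p.val.2)
    (h2 : Disjoint p.val.1.support p.val.2.support)
    (h3 : flt p.val.1.support p.val.2.support) :
    Phi p = Sum.inr (Sum.inl ⟨(p.val.1.support, p.val.2.support),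
        swap_support_card p.2.1, swap_support_card p.2.2, h2, h3⟩) := by
  rw [Phi, dif_neg h1, dif_pos h2, dif_pos h3]

lemma Phi_disj' (p : SP n) (h1 : ¬ p.val.1 = p.val.2)
    (h2 : Disjoint p.val.1.support p.val.2.support)
    (h3 : ¬ flt p.val.1.support p.val.2.support) :
    Phi p = Sum.inr (Sum.inl ⟨(p.val.2.support, p.val.1.support),
        swap_support_card p.2.2, swap_support_card p.2.1, h2.symm,
        ((flt_total (swap_support_nonempty p.2.1) (swap_support_nonempty p.2.2)
          h2).resolve_left h3)⟩) := by
  rw [Phi, dif_neg h1, dif_pos h2, dif_neg h3]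

lemma Phi_c3 (p : SP n) (h1 : ¬ p.val.1 = p.val.2)
    (h2 : ¬ Disjoint p.val.1.support p.val.2.support) :
    Phi p = Sum.inr (Sum.inr ⟨((p.val.1 * p.val.2).support,
      (p.val.1 * p.val.2) ((p.val.1 * p.val.2).support.min'
        (by rw [← Finset.card_pos, case3_card p.2.1 p.2.2 h1 h2]; norm_num))),
      case3_card p.2.1 p.2.2 h1 h2,
      (min_props _).1, (min_props _).2⟩) := by
  rw [Phi, dif_neg h1, dif_neg h2]

lemma cS_diag (p : SP n) (h1 : p.val.1 = p.val.2) : cS p = p := by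
  apply Subtype.ext
  apply Prod.ext
  · show p.val.1 * p.val.2 * p.val.1⁻¹ = p.val.1
    rw [← h1, mul_inv_cancel_right]
  · exact h1

lemma cS_disj (p : SP n) (h2 : Disjoint p.val.1.support p.val.2.support) :
    (cS p).val = (p.val.2, p.val.1) := by
  have hc : Commute p.val.1 p.val.2 :=
    (Perm.disjoint_iff_disjoint_support.2 h2).commute
  apply Prod.ext
  · show p.val.1 * p.val.2 * p.val.1⁻¹ = p.val.2
    rw [hc.eq, mul_inv_cancel_right]
  · rfl

lemma commute_of_conj_disj {x y : Perm (Fin n)}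
    (h : Disjoint (x * y * x⁻¹).support x.support) : x * y = y * x := by
  have hc : Commute (x * y * x⁻¹) x := (Perm.disjoint_iff_disjoint_support.2 h).commute
  have e := hc.eq
  rw [inv_mul_cancel_right] at e
  have e' : y = x * y * x⁻¹ := by
    rw [mul_assoc] at e
    exact mul_left_cancel e
  calc x * y = x * y * x⁻¹ * x := (inv_mul_cancel_right _ _).symm
    _ = y * x := by rw [← e']

lemma cS_c3_ne (p : SP n) (h1 : ¬ p.val.1 = p.val.2) :
    ¬ (cS p).val.1 = (cS p).val.2 := by
  show ¬ p.val.1 * p.val.2 * p.val.1⁻¹ = p.val.1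
  rw [conj_eq_iff]
  exact fun h => h1 h.symm

lemma cS_c3_ndisj (p : SP n) (h1 : ¬ p.val.1 = p.val.2)
    (h2 : ¬ Disjoint p.val.1.support p.val.2.support) :
    ¬ Disjoint (cS p).val.1.support (cS p).val.2.support := by
  intro h
  exact case3_not_commute p.2.1 p.2.2 h1 h2 (commute_of_conj_disj h)

lemma Phi_cS (p : SP n) : Phi (cS p) = Phi p := by
  by_cases h1 : p.val.1 = p.val.2
  · rw [cS_diag p h1]
  · by_cases h2 : Disjoint p.val.1.support p.val.2.support
    · have hval := cS_disj p h2
      have hA : (cS p).val.1 = p.val.2 := congrArg Prod.fst hval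
      have hB : (cS p).val.2 = p.val.1 := congrArg Prod.snd hval
      have h1' : ¬ (cS p).val.1 = (cS p).val.2 := by
        rw [hA, hB]; exact fun h => h1 h.symm
      have h2' : Disjoint (cS p).val.1.support (cS p).val.2.support := by
        rw [hA, hB]; exact h2.symm
      by_cases h3 : flt p.val.1.support p.val.2.support
      · have h3' : ¬ flt (cS p).val.1.support (cS p).val.2.support := by
          rw [hA, hB]; exact fun h => flt_asymm h3 h
        rw [Phi_disj' _ h1' h2' h3', Phi_disj _ h1 h2 h3]
        refine congrArg _ (congrArg _ ?_)
        apply Subtype.ext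
        show ((cS p).val.2.support, (cS p).val.1.support)
          = (p.val.1.support, p.val.2.support)
        rw [hA, hB]
      · have h3' : flt (cS p).val.1.support (cS p).val.2.support := by
          rw [hA, hB]
          exact (flt_total (swap_support_nonempty p.2.1)
            (swap_support_nonempty p.2.2) h2).resolve_left h3
        rw [Phi_disj _ h1' h2' h3', Phi_disj' _ h1 h2 h3]
        refine congrArg _ (congrArg _ ?_)
        apply Subtype.ext
        show ((cS p).val.1.support, (cS p).val.2.support)
          = (p.val.2.support, p.val.1.support)
        rw [hA, hB]
    · have h1' := cS_c3_ne p h1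
      have h2' := cS_c3_ndisj p h1 h2
      rw [Phi_c3 _ h1' h2', Phi_c3 _ h1 h2]
      refine congrArg _ (congrArg _ ?_)
      apply Subtype.ext
      have hz : (cS p).val.1 * (cS p).val.2 = p.val.1 * p.val.2 := cS_prod p
      simp only [hz]

def R (p q : SP n) : Prop :=
  ((p.val.1 * p.val.2 * p.val.1⁻¹, p.val.1) : Perm (Fin n) × Perm (Fin n)) = q.val

lemma step (p : SP n) : Quot.mk R p = Quot.mk R (cS p) := Quot.sound rfl

lemma Phi_diag_shape (p : SP n) (h1 : p.val.1 = p.val.2) :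
    ∃ A, Phi p = Sum.inl A := ⟨_, Phi_diag p h1⟩

lemma Phi_disj_shape (p : SP n) (h1 : ¬ p.val.1 = p.val.2)
    (h2 : Disjoint p.val.1.support p.val.2.support) :
    ∃ A, Phi p = Sum.inr (Sum.inl A) := by
  by_cases h3 : flt p.val.1.support p.val.2.support
  · exact ⟨_, Phi_disj p h1 h2 h3⟩
  · exact ⟨_, Phi_disj' p h1 h2 h3⟩

lemma Phi_c3_shape (p : SP n) (h1 : ¬ p.val.1 = p.val.2)
    (h2 : ¬ Disjoint p.val.1.support p.val.2.support) :
    ∃ A, Phi p = Sum.inr (Sum.inr A) := ⟨_, Phi_c3 p h1 h2⟩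

lemma eq_of_first_prod (q E : SP n) (h1 : q.val.1 = E.val.1)
    (h2 : q.val.1 * q.val.2 = E.val.1 * E.val.2) : q = E := by
  apply Subtype.ext
  apply Prod.ext h1
  rw [h1] at h2
  exact mul_left_cancel h2

lemma Phi_inj (p q : SP n) (h : Phi p = Phi q) : Quot.mk R p = Quot.mk R q := by
  by_cases hp1 : p.val.1 = p.val.2 <;> by_cases hq1 : q.val.1 = q.val.2
  · -- both diagonal
    rw [Phi_diag p hp1, Phi_diag q hq1] at h
    simp only [Sum.inl.injEq, Subtype.mk.injEq] at h
    have e1 : p.val.1 = q.val.1 := swap_eq_of_support_eq p.2.1 q.2.1 h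
    have : p = q := Subtype.ext (Prod.ext e1 (by rw [← hp1, ← hq1]; exact e1))
    rw [this]
  · -- diag vs non-diag
    by_cases hq2 : Disjoint q.val.1.support q.val.2.support
    · obtain ⟨A, hA⟩ := Phi_diag_shape p hp1
      obtain ⟨B, hB⟩ := Phi_disj_shape q hq1 hq2
      rw [hA, hB] at h; simp at h
    · obtain ⟨A, hA⟩ := Phi_diag_shape p hp1
      obtain ⟨B, hB⟩ := Phi_c3_shape q hq1 hq2
      rw [hA, hB] at h; simp at h
  · by_cases hp2 : Disjoint p.val.1.support p.val.2.support
    · obtain ⟨A, hA⟩ := Phi_disj_shape p hp1 hp2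
      obtain ⟨B, hB⟩ := Phi_diag_shape q hq1
      rw [hA, hB] at h; simp at h
    · obtain ⟨A, hA⟩ := Phi_c3_shape p hp1 hp2
      obtain ⟨B, hB⟩ := Phi_diag_shape q hq1
      rw [hA, hB] at h; simp at h
  · by_cases hp2 : Disjoint p.val.1.support p.val.2.support <;>
      by_cases hq2 : Disjoint q.val.1.support q.val.2.support
    · -- both disjoint
      by_cases hp3 : flt p.val.1.support p.val.2.support <;>
        by_cases hq3 : flt q.val.1.support q.val.2.support
      · rw [Phi_disj p hp1 hp2 hp3, Phi_disj q hq1 hq2 hq3] at h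
        simp only [Sum.inr.injEq, Sum.inl.injEq, Subtype.mk.injEq, Prod.mk.injEq] at h
        have e1 : p.val.1 = q.val.1 := swap_eq_of_support_eq p.2.1 q.2.1 h.1
        have e2 : p.val.2 = q.val.2 := swap_eq_of_support_eq p.2.2 q.2.2 h.2
        rw [show p = q from Subtype.ext (Prod.ext e1 e2)]
      · rw [Phi_disj p hp1 hp2 hp3, Phi_disj' q hq1 hq2 hq3] at h
        simp only [Sum.inr.injEq, Sum.inl.injEq, Subtype.mk.injEq, Prod.mk.injEq] at h
        have e1 : q.val.2 = p.val.1 := swap_eq_of_support_eq q.2.2 p.2.1 h.1.symm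
        have e2 : q.val.1 = p.val.2 := swap_eq_of_support_eq q.2.1 p.2.2 h.2.symm
        have : q = cS p := Subtype.ext (by rw [cS_disj p hp2]; exact Prod.ext e2 e1)
        rw [this]; exact step p
      · rw [Phi_disj' p hp1 hp2 hp3, Phi_disj q hq1 hq2 hq3] at h
        simp only [Sum.inr.injEq, Sum.inl.injEq, Subtype.mk.injEq, Prod.mk.injEq] at h
        have e1 : q.val.1 = p.val.2 := swap_eq_of_support_eq q.2.1 p.2.2 h.1.symm
        have e2 : q.val.2 = p.val.1 := swap_eq_of_support_eq q.2.2 p.2.1 h.2.symm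
        have : q = cS p := Subtype.ext (by rw [cS_disj p hp2]; exact Prod.ext e1 e2)
        rw [this]; exact step p
      · rw [Phi_disj' p hp1 hp2 hp3, Phi_disj' q hq1 hq2 hq3] at h
        simp only [Sum.inr.injEq, Sum.inl.injEq, Subtype.mk.injEq, Prod.mk.injEq] at h
        have e1 : p.val.1 = q.val.1 := swap_eq_of_support_eq p.2.1 q.2.1 h.2
        have e2 : p.val.2 = q.val.2 := swap_eq_of_support_eq p.2.2 q.2.2 h.1
        rw [show p = q from Subtype.ext (Prod.ext e1 e2)]
    · obtain ⟨A, hA⟩ := Phi_disj_shape p hp1 hp2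
      obtain ⟨B, hB⟩ := Phi_c3_shape q hq1 hq2
      rw [hA, hB] at h; simp at h
    · obtain ⟨A, hA⟩ := Phi_c3_shape p hp1 hp2
      obtain ⟨B, hB⟩ := Phi_disj_shape q hq1 hq2
      rw [hA, hB] at h; simp at h
    · -- both case 3
      rw [Phi_c3 p hp1 hp2, Phi_c3 q hq1 hq2] at h
      simp only [Sum.inr.injEq, Subtype.mk.injEq, Prod.mk.injEq] at h
      obtain ⟨hs, hv⟩ := h
      -- products are equal as permutations
      have hcard : (p.val.1 * p.val.2).support.card = 3 := case3_card p.2.1 p.2.2 hp1 hp2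
      have hmin : (p.val.1 * p.val.2).support.min'
            (by rw [← Finset.card_pos, hcard]; norm_num)
          = (q.val.1 * q.val.2).support.min'
            (by rw [← Finset.card_pos, case3_card q.2.1 q.2.2 hq1 hq2]; norm_num) := by
        congr 1
      have hne : (p.val.1 * p.val.2).support.Nonempty := by
        rw [← Finset.card_pos, hcard]; norm_num
      have hzz : p.val.1 * p.val.2 = q.val.1 * q.val.2 := by
        refine three_cycle_det hcard rfl hs.symm
          ((p.val.1 * p.val.2).support.min'_mem hne) ?_
        rw [hv, hmin]
      obtain ⟨a, b, c, hab, hac, hbc, hp_1, hp_2⟩ := case3_explicit p.2.1 p.2.2 hp1 hp2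
      obtain ⟨a', b', c', hab', hac', hbc', hq_1, hq_2⟩ := case3_explicit q.2.1 q.2.2 hq1 hq2
      have hsupp : (p.val.1 * p.val.2).support = {a, b, c} := by
        rw [hp_1, hp_2]; exact z_support hab hac hbc
      have hsupp' : (q.val.1 * q.val.2).support = {a', b', c'} := by
        rw [hq_1, hq_2]; exact z_support hab' hac' hbc'
      have hset : ({a', b', c'} : Finset (Fin n)) = {a, b, c} :=
        hsupp'.symm.trans (hs.symm.trans hsupp)
      have ha' : a' = a ∨ a' = b ∨ a' = c := by
        have : a' ∈ ({a, b, c} : Finset (Fin n)) := hset ▸ (by simp)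
        simpa using this
      have hb' : b' = a ∨ b' = b ∨ b' = c := by
        have : b' ∈ ({a, b, c} : Finset (Fin n)) := hset ▸ (by simp)
        simpa using this
      have hC1 : (cS p).val.1 = swap a c := by
        show p.val.1 * p.val.2 * p.val.1⁻¹ = swap a c
        rw [hp_1, hp_2, ← swap_apply_apply, swap_apply_right,
          swap_apply_of_ne_of_ne hac.symm hbc.symm]
      have hC2 : (cS (cS p)).val.1 = swap c b := by
        show (cS p).val.1 * (cS p).val.2 * (cS p).val.1⁻¹ = swap c b
        have e2 : (cS p).val.2 = swap a b := hp_1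
        rw [hC1, e2, ← swap_apply_apply, swap_apply_left,
          swap_apply_of_ne_of_ne hab.symm hbc]
      have hz1 : (cS p).val.1 * (cS p).val.2 = p.val.1 * p.val.2 := cS_prod p
      have hz2 : (cS (cS p)).val.1 * (cS (cS p)).val.2 = p.val.1 * p.val.2 :=
        (cS_prod (cS p)).trans hz1
      rcases ha' with rfl | rfl | rfl <;> rcases hb' with rfl | rfl | rfl
      · exact absurd rfl hab'
      · rw [show q = p from eq_of_first_prod q p (hq_1.trans hp_1.symm) hzz.symm]
      · rw [show q = cS p from eq_of_first_prod q (cS p) (hq_1.trans hC1.symm)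
          (hzz.symm.trans hz1.symm)]
        exact step p
      · rw [show q = p from eq_of_first_prod q p
          (hq_1.trans ((swap_comm _ _).trans hp_1.symm)) hzz.symm]
      · exact absurd rfl hab'
      · rw [show q = cS (cS p) from eq_of_first_prod q (cS (cS p))
          (hq_1.trans ((swap_comm _ _).trans hC2.symm)) (hzz.symm.trans hz2.symm)]
        exact (step p).trans (step (cS p))
      · rw [show q = cS p from eq_of_first_prod q (cS p)
          (hq_1.trans ((swap_comm _ _).trans hC1.symm)) (hzz.symm.trans hz1.symm)]
        exact step p
      · rw [show q = cS (cS p) from eq_of_first_prod q (cS (cS p))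
          (hq_1.trans hC2.symm) (hzz.symm.trans hz2.symm)]
        exact (step p).trans (step (cS p))
      · exact absurd rfl hab'

lemma swap_ne_swap {a b c d : Fin n} (hab : a ≠ b) (hcd : c ≠ d)
    (hm : a ∉ ({c, d} : Finset (Fin n))) : swap a b ≠ swap c d := by
  intro h
  have := congrArg Perm.support h
  rw [support_swap hab, support_swap hcd] at this
  exact hm (this ▸ (by simp : a ∈ ({a, b} : Finset (Fin n))))

lemma Phi_surj (o : OT n) : ∃ p : SP n, Phi p = o := by
  rcases o with ⟨s, h2⟩ | ⟨⟨⟨s, t⟩, hs2, ht2, hd, hlt⟩⟩ | ⟨⟨⟨s, v⟩, h3c, hv, hex⟩⟩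
  · obtain ⟨a, b, hab, rfl⟩ := Finset.card_eq_two.1 h2
    refine ⟨⟨(swap a b, swap a b), ⟨a, b, hab, rfl⟩, ⟨a, b, hab, rfl⟩⟩, ?_⟩
    rw [Phi_diag _ rfl]
    exact congrArg Sum.inl (Subtype.ext (support_swap hab))
  · obtain ⟨a, b, hab, rfl⟩ := Finset.card_eq_two.1 hs2
    obtain ⟨c, d, hcd, rfl⟩ := Finset.card_eq_two.1 ht2
    refine ⟨⟨(swap a b, swap c d), ⟨a, b, hab, rfl⟩, ⟨c, d, hcd, rfl⟩⟩, ?_⟩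
    have h1 : ¬ (swap a b = swap c d) :=
      swap_ne_swap hab hcd (Finset.disjoint_left.1 hd (by simp))
    have h2' : Disjoint (swap a b).support (swap c d).support := by
      rw [support_swap hab, support_swap hcd]; exact hd
    have h3 : flt (swap a b).support (swap c d).support := by
      rw [support_swap hab, support_swap hcd]; exact hlt
    rw [Phi_disj ⟨(swap a b, swap c d), ⟨a, b, hab, rfl⟩, ⟨c, d, hcd, rfl⟩⟩ h1 h2' h3]
    refine congrArg _ (congrArg _ (Subtype.ext ?_))
    show ((swap a b).support, (swap c d).support) = _
    rw [support_swap hab, support_swap hcd]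
  · have hsne : s.Nonempty := by rw [← Finset.card_pos, h3c]; norm_num
    set m := s.min' hsne with hm
    have hmv : m ≠ v := by
      obtain ⟨u, hu, huv⟩ := hex
      exact fun h => absurd (h ▸ s.min'_le u hu) (not_le.2 huv)
    obtain ⟨t, hts, htm, htv⟩ : ∃ t, t ∈ s ∧ t ≠ m ∧ t ≠ v := by
      have : ((s.erase m).erase v).Nonempty := by
        rw [← Finset.card_pos, Finset.card_erase_of_mem
          (Finset.mem_erase.2 ⟨hmv.symm, hv⟩), Finset.card_erase_of_mem (s.min'_mem hsne), h3c]
        norm_num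
      obtain ⟨t, ht⟩ := this
      simp only [Finset.mem_erase] at ht
      exact ⟨t, ht.2.2, ht.2.1, ht.1⟩
    have hvt : v ≠ t := htv.symm
    have hmt : m ≠ t := htm.symm
    refine ⟨⟨(swap m v, swap v t), ⟨m, v, hmv, rfl⟩, ⟨v, t, hvt, rfl⟩⟩, ?_⟩
    have h1 : ¬ (swap m v = swap v t) :=
      swap_ne_swap hmv hvt (by simp [hmv, hmt])
    have h2' : ¬ Disjoint (swap m v).support (swap v t).support := by
      rw [support_swap hmv, support_swap hvt]
      exact fun hdd => Finset.disjoint_left.1 hdd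
        (show v ∈ ({m, v} : Finset (Fin n)) by simp)
        (show v ∈ ({v, t} : Finset (Fin n)) by simp)
    have hseq : (swap m v * swap v t).support = s := by
      rw [z_support hmv hmt hvt]
      refine Finset.eq_of_subset_of_card_le ?_ ?_
      · intro x hx
        simp only [Finset.mem_insert, Finset.mem_singleton] at hx
        rcases hx with rfl | rfl | rfl
        exacts [s.min'_mem hsne, hv, hts]
      · rw [h3c, Finset.card_insert_of_notMem (by simp [hmv, hmt]),
          Finset.card_insert_of_notMem (by simp [hvt])]
        simp
    rw [Phi_c3 ⟨(swap m v, swap v t), ⟨m, v, hmv, rfl⟩, ⟨v, t, hvt, rfl⟩⟩ h1 h2']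
    refine congrArg _ (congrArg _ (Subtype.ext ?_))
    show ((swap m v * swap v t).support, _) = (s, v)
    have hne2 : (swap m v * swap v t).support.Nonempty := by
      rw [hseq]; exact hsne
    have hmin : ∀ (pf : (swap m v * swap v t).support.Nonempty),
        (swap m v * swap v t).support.min' pf = m := by
      intro pf
      refine le_antisymm ?_ ?_
      · exact Finset.min'_le _ _ (hseq.symm ▸ s.min'_mem hsne)
      · exact s.min'_le _ (hseq ▸ Finset.min'_mem _ pf)
    refine Prod.ext hseq ?_
    show (swap m v * swap v t) _ = v
    rw [hmin, z_apply_a hmv hmt]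

noncomputable def gQ : Quot (R (n := n)) → OT n :=
  Quot.lift Phi (fun p q hpq => (Phi_cS p).symm.trans (congrArg Phi (Subtype.ext hpq)))

lemma gQ_bij : Function.Bijective (gQ (n := n)) := by
  constructor
  · intro u v
    induction u using Quot.ind with | _ p =>
    induction v using Quot.ind with | _ q =>
    exact fun h => Phi_inj p q h
  · intro o
    obtain ⟨p, hp⟩ := Phi_surj o
    exact ⟨Quot.mk _ p, hp⟩

lemma card_quot :
    Nat.card (Quot (R (n := n))) = Nat.card (OT n) :=
  Nat.card_eq_of_bijective _ gQ_bij

lemma card_O1 : Nat.card {s : Finset (Fin n) // s.card = 2} = n.choose 2 := by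
  rw [Nat.card_eq_fintype_card, Fintype.card_finset_len, Fintype.card_fin]

lemma card_O3 :
    Nat.card {q : Finset (Fin n) × Fin n //
      q.1.card = 3 ∧ q.2 ∈ q.1 ∧ ∃ u ∈ q.1, u < q.2} = 2 * n.choose 3 := by
  have e : {q : Finset (Fin n) × Fin n // q.1.card = 3 ∧ q.2 ∈ q.1 ∧ ∃ u ∈ q.1, u < q.2} ≃
      Σ s : {s : Finset (Fin n) // s.card = 3}, {v : Fin n // v ∈ s.val ∧ ∃ u ∈ s.val, u < v} :=
    { toFun := fun q => ⟨⟨q.val.1, q.2.1⟩, ⟨q.val.2, q.2.2.1, q.2.2.2⟩⟩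
      invFun := fun x => ⟨(x.1.val, x.2.val), x.1.2, x.2.2.1, x.2.2.2⟩
      left_inv := fun q => rfl
      right_inv := fun x => rfl }
  rw [Nat.card_congr e, Nat.card_eq_fintype_card, Fintype.card_sigma]
  have hfib : ∀ s : {s : Finset (Fin n) // s.card = 3},
      Fintype.card {v : Fin n // v ∈ s.val ∧ ∃ u ∈ s.val, u < v} = 2 := by
    rintro ⟨s, hs⟩
    have hne : s.Nonempty := by rw [← Finset.card_pos, hs]; norm_num
    have hiff : ∀ v : Fin n, (v ∈ s ∧ ∃ u ∈ s, u < v) ↔ v ∈ s.erase (s.min' hne) := by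
      intro v
      rw [Finset.mem_erase]
      constructor
      · rintro ⟨hv, u, hu, huv⟩
        exact ⟨fun h => absurd (h ▸ s.min'_le u hu) (not_le.2 huv), hv⟩
      · rintro ⟨hv1, hv2⟩
        exact ⟨hv2, s.min' hne, s.min'_mem hne,
          lt_of_le_of_ne (s.min'_le v hv2) (Ne.symm hv1)⟩
    rw [Fintype.card_congr (Equiv.subtypeEquivRight hiff), Fintype.card_coe,
      Finset.card_erase_of_mem (s.min'_mem hne), hs]
  rw [Finset.sum_congr rfl (fun s _ => hfib s), Finset.sum_const, Finset.card_univ,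
    Fintype.card_finset_len, Fintype.card_fin, smul_eq_mul, mul_comm]

lemma two_mul_card_O2 :
    2 * Nat.card {q : Finset (Fin n) × Finset (Fin n) //
        q.1.card = 2 ∧ q.2.card = 2 ∧ Disjoint q.1 q.2 ∧ flt q.1 q.2}
      = n.choose 2 * (n - 2).choose 2 := by
  classical
  set P : Finset (Fin n) × Finset (Fin n) → Prop :=
    fun q => q.1.card = 2 ∧ q.2.card = 2 ∧ Disjoint q.1 q.2 with hP
  set F : Finset (Finset (Fin n) × Finset (Fin n)) := Finset.univ.filter P with hF
  -- card of the subtype is the card of the flt-filter of F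
  have hsub : Nat.card {q : Finset (Fin n) × Finset (Fin n) //
      q.1.card = 2 ∧ q.2.card = 2 ∧ Disjoint q.1 q.2 ∧ flt q.1 q.2}
      = (F.filter (fun q => flt q.1 q.2)).card := by
    rw [Nat.card_eq_fintype_card, Fintype.card_subtype]
    congr 1
    ext q
    simp [hF, hP, and_assoc]
  -- the two order-filters have the same cardinality via Prod.swap
  have hswapmem : ∀ q : Finset (Fin n) × Finset (Fin n),
      q ∈ F.filter (fun q => flt q.2 q.1) → q.swap ∈ F.filter (fun q => flt q.1 q.2) := by
    rintro ⟨s, t⟩ hq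
    simp only [hF, hP, Finset.mem_filter, Finset.mem_univ, true_and, Prod.swap] at hq ⊢
    exact ⟨⟨hq.1.2.1, hq.1.1, hq.1.2.2.symm⟩, hq.2⟩
  have hcard21 : (F.filter (fun q => flt q.2 q.1)).card
      = (F.filter (fun q => flt q.1 q.2)).card := by
    refine Finset.card_bij (fun q _ => q.swap) hswapmem ?_ ?_
    · intro a _ b _ hab
      exact Prod.swap_injective hab
    · rintro ⟨s, t⟩ hb
      refine ⟨(t, s), ?_, rfl⟩
      simp only [hF, hP, Finset.mem_filter, Finset.mem_univ, true_and] at hb ⊢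
      exact ⟨⟨hb.1.2.1, hb.1.1, hb.1.2.2.symm⟩, hb.2⟩
  -- the two order-filters partition F
  have hpart : (F.filter (fun q => flt q.1 q.2)).card
      + (F.filter (fun q => flt q.2 q.1)).card = F.card := by
    have hneg : F.filter (fun q => flt q.2 q.1) = F.filter (fun q => ¬ flt q.1 q.2) := by
      ext q
      simp only [hF, hP, Finset.mem_filter, Finset.mem_univ, true_and]
      constructor
      · rintro ⟨hq, h21⟩
        exact ⟨hq, fun h12 => flt_asymm h12 h21⟩
      · rintro ⟨hq, h12⟩
        refine ⟨hq, ?_⟩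
        have hs : q.1.Nonempty := by rw [← Finset.card_pos, hq.1]; norm_num
        have ht : q.2.Nonempty := by rw [← Finset.card_pos, hq.2.1]; norm_num
        exact (flt_total hs ht hq.2.2).resolve_left h12
    rw [hneg]
    exact Finset.card_filter_add_card_filter_not _
  -- count F fiberwise
  have hFcard : F.card = n.choose 2 * (n - 2).choose 2 := by
    have hfib := Finset.card_eq_sum_card_fiberwise
      (f := Prod.fst) (s := F) (t := Finset.univ.filter (fun s : Finset (Fin n) => s.card = 2))
      (by rintro ⟨s, t⟩ hq
          simp only [hF, hP, Finset.mem_coe, Finset.mem_filter, Finset.mem_univ, true_and] at hq ⊢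
          exact hq.1)
    rw [hfib]
    have hinner : ∀ s ∈ Finset.univ.filter (fun s : Finset (Fin n) => s.card = 2),
        (F.filter (fun q => q.1 = s)).card = (n - 2).choose 2 := by
      intro s hs
      simp only [Finset.mem_filter, Finset.mem_univ, true_and] at hs
      have hbij : (F.filter (fun q => q.1 = s)).card
          = (Finset.univ.filter (fun t : Finset (Fin n) => t.card = 2 ∧ _root_.Disjoint s t)).card := by
        refine Finset.card_bij (fun q _ => q.2) ?_ ?_ ?_
        · rintro ⟨s', t⟩ hq
          simp only [hF, hP, Finset.mem_filter, Finset.mem_univ, true_and] at hq ⊢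
          obtain ⟨⟨h1, h2, h3⟩, h4⟩ := hq
          subst h4
          exact ⟨h2, h3⟩
        · rintro ⟨s1, t1⟩ h1 ⟨s2, t2⟩ h2 hteq
          simp only [hF, hP, Finset.mem_filter, Finset.mem_univ, true_and] at h1 h2
          simp only [] at hteq
          rw [Prod.mk.injEq]
          exact ⟨h1.2.trans h2.2.symm, hteq⟩
        · intro t ht
          simp only [Finset.mem_filter, Finset.mem_univ, true_and] at ht
          refine ⟨(s, t), ?_, rfl⟩
          simp only [hF, hP, Finset.mem_filter, Finset.mem_univ, true_and]
          exact ⟨⟨hs, ht.1, ht.2⟩, by trivial⟩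
      rw [hbij]
      have hps : (Finset.univ.filter (fun t : Finset (Fin n) => t.card = 2 ∧ _root_.Disjoint s t))
          = Finset.powersetCard 2 sᶜ := by
        ext t
        simp only [Finset.mem_filter, Finset.mem_univ, true_and, Finset.mem_powersetCard]
        constructor
        · rintro ⟨h1, h2⟩
          refine ⟨fun x hx => Finset.mem_compl.2 (fun hxs => ?_), h1⟩
          exact Finset.disjoint_left.1 h2 hxs hx
        · rintro ⟨h1, h2⟩
          refine ⟨h2, Finset.disjoint_left.2 (fun x hxs hxt => ?_)⟩
          exact Finset.mem_compl.1 (h1 hxt) hxs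
      rw [hps, Finset.card_powersetCard, Finset.card_compl, Fintype.card_fin, hs]
    rw [Finset.sum_congr rfl hinner, Finset.sum_const, smul_eq_mul]
    congr 1
    have := Fintype.card_subtype (fun s : Finset (Fin n) => s.card = 2)
    rw [Fintype.card_finset_len, Fintype.card_fin] at this
    exact this.symm
  omega

lemma two_mul_choose_two : ∀ m : ℕ, 2 * (m + 1).choose 2 = (m + 1) * m := by
  intro m
  induction m with
  | zero => rfl
  | succ k ih =>
    have : (k + 2).choose 2 = (k + 1).choose 1 + (k + 1).choose 2 := by
      rw [Nat.choose_succ_succ]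
    rw [this, Nat.choose_one_right, Nat.mul_add, ih]
    ring

lemma six_mul_choose_three : ∀ m : ℕ, 6 * (m + 2).choose 3 = (m + 2) * (m + 1) * m := by
  intro m
  induction m with
  | zero => rfl
  | succ k ih =>
    have : (k + 3).choose 3 = (k + 2).choose 2 + (k + 2).choose 3 := by
      rw [Nat.choose_succ_succ]
    rw [this, Nat.mul_add, ih]
    have h2 : 2 * (k + 2).choose 2 = (k + 2) * (k + 1) := two_mul_choose_two (k + 1)
    -- 6 * (k+2).choose 2 = 3 * ((k+2)*(k+1))
    have h6 : 6 * (k + 2).choose 2 = 3 * ((k + 2) * (k + 1)) := by omega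
    rw [h6]
    ring

lemma total_eq (n : ℕ) :
    Nat.card (Quot (fun p q : {p : Perm (Fin n) × Perm (Fin n) // p.1.IsSwap ∧ p.2.IsSwap} =>
        ((p.val.1 * p.val.2 * p.val.1⁻¹, p.val.1) : Perm (Fin n) × Perm (Fin n)) = q.val))
      = n.choose 2 + (Nat.card {q : Finset (Fin n) × Finset (Fin n) //
          q.1.card = 2 ∧ q.2.card = 2 ∧ _root_.Disjoint q.1 q.2 ∧ flt q.1 q.2}
        + 2 * n.choose 3) := by
  show Nat.card (Quot (R (n := n))) = _
  rw [card_quot]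
  show Nat.card (_ ⊕ (_ ⊕ _)) = _
  rw [Nat.card_sum, Nat.card_sum, card_O1, card_O3]

/-- The number of orbits of `c(x,y) = (xyx⁻¹, x)` on pairs of transpositions of `S_n`
is `f(n) = C(n,2) + (1/2)C(n,2)C(n-2,2) + 2C(n,3) = n(3n³ - 10n² + 21n - 14)/24`. -/
theorem transposition_rack_orbit_count (n : ℕ) (hn : 3 ≤ n) :
    Nat.card (Quot (fun p q : {p : Perm (Fin n) × Perm (Fin n) // p.1.IsSwap ∧ p.2.IsSwap} =>
        ((p.val.1 * p.val.2 * p.val.1⁻¹, p.val.1) : Perm (Fin n) × Perm (Fin n)) = q.val)) =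
      n.choose 2 + n.choose 2 * (n - 2).choose 2 / 2 + 2 * n.choose 3 ∧
    ((Nat.card (Quot (fun p q : {p : Perm (Fin n) × Perm (Fin n) // p.1.IsSwap ∧ p.2.IsSwap} =>
        ((p.val.1 * p.val.2 * p.val.1⁻¹, p.val.1) : Perm (Fin n) × Perm (Fin n)) = q.val)) : ℤ))
        * 24 = n * (3 * (n : ℤ) ^ 3 - 10 * (n : ℤ) ^ 2 + 21 * n - 14) := by
  obtain ⟨m, rfl⟩ : ∃ m, n = m + 3 := ⟨n - 3, by omega⟩
  have htot := total_eq (m + 3)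
  have hN := two_mul_card_O2 (n := m + 3)
  have hsub : m + 3 - 2 = m + 1 := by omega
  rw [hsub] at hN ⊢
  set N2 := Nat.card {q : Finset (Fin (m + 3)) × Finset (Fin (m + 3)) //
      q.1.card = 2 ∧ q.2.card = 2 ∧ _root_.Disjoint q.1 q.2 ∧ flt q.1 q.2} with hN2def
  have hA : 2 * (m + 3).choose 2 = (m + 3) * (m + 2) := two_mul_choose_two (m + 2)
  have hB : 2 * (m + 1).choose 2 = (m + 1) * m := two_mul_choose_two m
  have hC : 6 * (m + 3).choose 3 = (m + 3) * (m + 2) * (m + 1) := six_mul_choose_three (m + 1)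
  constructor
  · rw [htot]
    have : N2 = (m + 3).choose 2 * (m + 1).choose 2 / 2 := by
      generalize hk : (m + 3).choose 2 * (m + 1).choose 2 = k at hN
      omega
    omega
  · rw [htot]
    have hAZ : (2 : ℤ) * ((m + 3).choose 2 : ℤ) = ((m : ℤ) + 3) * ((m : ℤ) + 2) := by
      exact_mod_cast congrArg (Nat.cast : ℕ → ℤ) hA
    have hBZ : (2 : ℤ) * ((m + 1).choose 2 : ℤ) = ((m : ℤ) + 1) * (m : ℤ) := by
      exact_mod_cast congrArg (Nat.cast : ℕ → ℤ) hB
    have hCZ : (6 : ℤ) * ((m + 3).choose 3 : ℤ)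
        = ((m : ℤ) + 3) * ((m : ℤ) + 2) * ((m : ℤ) + 1) := by
      exact_mod_cast congrArg (Nat.cast : ℕ → ℤ) hC
    have hNZ : (2 : ℤ) * (N2 : ℤ) = ((m + 3).choose 2 : ℤ) * ((m + 1).choose 2 : ℤ) := by
      exact_mod_cast congrArg (Nat.cast : ℕ → ℤ) hN
    have hprod : (4 : ℤ) * (((m + 3).choose 2 : ℤ) * ((m + 1).choose 2 : ℤ))
        = (((m : ℤ) + 3) * ((m : ℤ) + 2)) * (((m : ℤ) + 1) * (m : ℤ)) := by
      calc (4 : ℤ) * (((m + 3).choose 2 : ℤ) * ((m + 1).choose 2 : ℤ))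
          = (2 * ((m + 3).choose 2 : ℤ)) * (2 * ((m + 1).choose 2 : ℤ)) := by ring
        _ = _ := by rw [hAZ, hBZ]
    push_cast
    linear_combination (12 : ℤ) * hAZ + 12 * hNZ + 3 * hprod + 8 * hCZ
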